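/- With c_k defined by c₀ = 1 and c_k = (1/k) ∑_{j=2}^{k} c_{k-j} Z(j) for k ≥ 1 (where Z(j) = ∑_p p^{-j}), the series ∑_{k≥0} c_k converges and equals exp(∑_{j≥2} Z(j)/j) = e^{γ - β}, where γ is the Euler–Mascheroni constant and β is Mertens' constant. -/

import Mathlib

open Filter Real Asymptotics
open scoped Classical Topology BigOperators

/-- The finite set of primes `p ≤ x`, for a real number `x`. -/
noncomputable def primesUpTo (x : ℝ) : Finset ℕ :=
  (Finset.range (⌊x⌋₊ + 1)).filter Nat.Prime

/-- `n` is `x`-smooth: `n` is a positive integer all of whose prime factors are `≤ x`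
(equivalently, `P⁺(n) ≤ x`). -/
def IsSmooth (x : ℝ) (n : ℕ) : Prop := 0 < n ∧ ∀ p ∈ n.primeFactors, (p : ℝ) ≤ x

/-- `Ω n`: number of prime factors of `n` counted with multiplicity. -/
def bigOmega (n : ℕ) : ℕ := n.primeFactorsList.length

/-- Truncated prime zeta function `Z(t, x) = ∑_{p ≤ x} p^{-t}`. -/
noncomputable def Ztr (t x : ℝ) : ℝ := ∑ p ∈ primesUpTo x, (p : ℝ) ^ (-t)

/-- Prime zeta function `Z(j) = ∑_p p^{-j}`. -/
noncomputable def Zp (j : ℕ) : ℝ := ∑' p : Nat.Primes, (1 : ℝ) / ((p : ℕ) : ℝ) ^ j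


lemma prime_two_le (p : Nat.Primes) : (2:ℝ) ≤ ((p:ℕ):ℝ) := by exact_mod_cast p.2.two_le
lemma summable_primes_pow {j : ℕ} (hj : 2 ≤ j) :
    Summable (fun p : Nat.Primes => (1:ℝ) / ((p:ℕ):ℝ) ^ j) := by
  have h : Summable (fun n : ℕ => 1 / (n:ℝ) ^ j) :=
    Real.summable_one_div_nat_pow.mpr (by omega)
  exact h.subtype {p : ℕ | p.Prime}
lemma Zp_nonneg (j : ℕ) : 0 ≤ Zp j := tsum_nonneg (fun p => by positivity)
lemma summable_shift2_sq : Summable (fun n : ℕ => 1/((n:ℝ)+2)^2) := by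
  have h := (summable_nat_add_iff 2).mpr (Real.summable_one_div_nat_pow.mpr one_lt_two)
  refine h.congr fun n => ?_
  push_cast; ring

lemma sum_range_shift2 (N : ℕ) :
    ∑ n ∈ Finset.range N, 1/((n:ℝ)+2)^2 ≤ 1 - 1/((N:ℝ)+1) := by
  induction N with
  | zero => simp
  | succ N ih =>
    rw [Finset.sum_range_succ]
    have hN : (0:ℝ) < (N:ℝ) + 1 := by positivity
    have hN2 : (0:ℝ) < (N:ℝ) + 2 := by positivity
    have key : 1/((N:ℝ)+2)^2 ≤ 1/((N:ℝ)+1) - 1/((N:ℝ)+2) := by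
      rw [div_sub_div _ _ (ne_of_gt hN) (ne_of_gt hN2), div_le_div_iff₀ (by positivity) (by positivity)]
      ring_nf
      nlinarith [sq_nonneg ((N:ℝ))]
    push_cast
    have : ((N:ℝ)+1)+1 = (N:ℝ)+2 := by ring
    rw [this]
    linarith

lemma Zp2_le_one : Zp 2 ≤ 1 := by
  have h1 : Zp 2 ≤ ∑' n : ℕ, 1/((n:ℝ)+2)^2 := by
    refine Summable.tsum_le_tsum_of_inj (fun p : Nat.Primes => (p:ℕ) - 2) ?_ (fun c _ => by positivity)
      ?_ (summable_primes_pow le_rfl) summable_shift2_sq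
    · intro p q h
      have hp := p.2.two_le; have hq := q.2.two_le
      have h' : (p:ℕ) - 2 = (q:ℕ) - 2 := h
      have hv : (p:ℕ) = (q:ℕ) := by omega
      exact Subtype.ext hv
    · intro p
      have hp : 2 ≤ (p:ℕ) := p.2.two_le
      have : (((p:ℕ) - 2 : ℕ) : ℝ) + 2 = ((p:ℕ):ℝ) := by
        have : ((p:ℕ) - 2) + 2 = (p:ℕ) := by omega
        exact_mod_cast congrArg (Nat.cast : ℕ → ℝ) this
      rw [this]
  refine h1.trans (Real.tsum_le_of_sum_range_le (fun n => by positivity) fun N => ?_)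
  have := sum_range_shift2 N
  have h2 : (0:ℝ) < 1/((N:ℝ)+1) := by positivity
  linarith

lemma Zp_le {j : ℕ} (hj : 2 ≤ j) : Zp j ≤ 4 * (1/2:ℝ)^j := by
  have h1 : Zp j ≤ (1/2:ℝ)^(j-2) * Zp 2 := by
    rw [Zp, Zp, ← tsum_mul_left]
    refine Summable.tsum_le_tsum (fun p => ?_) (summable_primes_pow hj)
      ((summable_primes_pow le_rfl).mul_left _)
    have hp : (2:ℝ) ≤ ((p:ℕ):ℝ) := prime_two_le p
    have hp0 : (0:ℝ) < ((p:ℕ):ℝ) := by linarith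
    have e1 : (1:ℝ) / ((p:ℕ):ℝ) ^ j = (1/((p:ℕ):ℝ))^(j-2) * (1 / ((p:ℕ):ℝ)^2) := by
      rw [one_div_pow, div_mul_div_comm, one_mul, ← pow_add]
      congr 2
      omega
    rw [e1]
    apply mul_le_mul_of_nonneg_right _ (by positivity)
    apply pow_le_pow_left₀ (by positivity)
    rw [div_le_div_iff₀ hp0 (by norm_num)]
    linarith
  have h2 : (1/2:ℝ)^(j-2) * Zp 2 ≤ (1/2:ℝ)^(j-2) := by
    nlinarith [Zp2_le_one, pow_nonneg (by norm_num : (0:ℝ) ≤ 1/2) (j-2), Zp_nonneg 2]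
  have h3 : (1/2:ℝ)^(j-2) = 4 * (1/2:ℝ)^j := by
    have e : (1/2:ℝ)^j = (1/2:ℝ)^(j-2) * (1/2:ℝ)^2 := by
      rw [← pow_add]; congr 1; omega
    rw [e]; ring
  linarith [h3 ▸ h2]

noncomputable def bb (j : ℕ) : ℝ := if 2 ≤ j then Zp j else 0

lemma bb_nonneg (j : ℕ) : 0 ≤ bb j := by
  unfold bb; split
  · exact Zp_nonneg j
  · exact le_refl 0

lemma bb_le (j : ℕ) : bb j ≤ 4 * (1/2:ℝ)^j := by
  unfold bb; split
  · exact Zp_le ‹_›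
  · positivity

lemma bb_zero : bb 0 = 0 := by simp [bb]
lemma bb_one : bb 1 = 0 := by simp [bb]

-- geometric tail bound
lemma sum_pow_five_ninth (k : ℕ) : ∑ j ∈ Finset.Icc 2 k, (5/9:ℝ)^j ≤ 25/36 := by
  rcases lt_or_ge k 2 with hk | hk
  · rw [Finset.Icc_eq_empty (by omega)]
    norm_num
  · have hsplit : ∑ j ∈ Finset.Ico 0 2, (5/9:ℝ)^j + ∑ j ∈ Finset.Ico 2 (k+1), (5/9:ℝ)^j
        = ∑ j ∈ Finset.Ico 0 (k+1), (5/9:ℝ)^j :=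
      Finset.sum_Ico_consecutive _ (by omega) (by omega)
    have h0 : ∑ j ∈ Finset.Ico 0 2, (5/9:ℝ)^j = 1 + 5/9 := by norm_num [Finset.sum_Ico_eq_sum_range]
    have hr : ∑ j ∈ Finset.Ico 0 (k+1), (5/9:ℝ)^j ≤ 9/4 := by
      rw [← Finset.range_eq_Ico]
      have hs : Summable (fun i : ℕ => (5/9:ℝ)^i) :=
        summable_geometric_of_lt_one (by norm_num) (by norm_num)
      calc ∑ i ∈ Finset.range (k+1), (5/9:ℝ)^i ≤ ∑' i : ℕ, (5/9:ℝ)^i :=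
            Summable.sum_le_tsum _ (fun i _ => by positivity) hs
        _ = (1 - 5/9)⁻¹ := tsum_geometric_of_lt_one (by norm_num) (by norm_num)
        _ ≤ 9/4 := by norm_num
    have hIcc : Finset.Ico 2 (k+1) = Finset.Icc 2 k := by
      rw [Finset.Ico_add_one_right_eq_Icc]
    rw [← hIcc]
    linarith

section cbounds
variable (c : ℕ → ℝ) (hc0 : c 0 = 1)
  (hc : ∀ k, 1 ≤ k → c k = (1 / (k : ℝ)) * ∑ j ∈ Finset.Icc 2 k, c (k - j) * Zp j)
include hc0 hc

lemma c_nonneg : ∀ k, 0 ≤ c k := by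
  intro k
  induction k using Nat.strong_induction_on with
  | _ k ih =>
    rcases Nat.eq_zero_or_pos k with rfl | hk
    · rw [hc0]; norm_num
    · rw [hc k hk]
      refine mul_nonneg (by positivity) (Finset.sum_nonneg fun j hj => ?_)
      rw [Finset.mem_Icc] at hj
      exact mul_nonneg (ih (k - j) (by omega)) (Zp_nonneg j)

lemma c_le : ∀ k, c k ≤ 2 * (9/10:ℝ)^k := by
  intro k
  induction k using Nat.strong_induction_on with
  | _ k ih =>
    rcases Nat.lt_or_ge k 3 with hk3 | hk3
    · interval_cases k
      · rw [hc0]; norm_num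
      · rw [hc 1 le_rfl, Finset.Icc_eq_empty (by omega)]
        norm_num
      · rw [hc 2 (by omega)]
        have : Finset.Icc 2 2 = {2} := rfl
        rw [this, Finset.sum_singleton]
        have h2 : Zp 2 ≤ 1 := by have := Zp_le (le_rfl : 2 ≤ 2); norm_num at this; linarith
        have h0 : (0:ℝ) ≤ Zp 2 := Zp_nonneg 2
        simp only [Nat.sub_self, hc0]
        norm_num
        nlinarith
    · have hk : 1 ≤ k := by omega
      rw [hc k hk]
      have hterm : ∀ j ∈ Finset.Icc 2 k,
          c (k - j) * Zp j ≤ 8 * (9/10:ℝ)^k * (5/9:ℝ)^j := by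
        intro j hj
        rw [Finset.mem_Icc] at hj
        have h1 : c (k - j) ≤ 2 * (9/10:ℝ)^(k-j) := ih (k - j) (by omega)
        have h2 : Zp j ≤ 4 * (1/2:ℝ)^j := Zp_le hj.1
        have h3 : c (k - j) * Zp j ≤ (2 * (9/10:ℝ)^(k-j)) * (4 * (1/2:ℝ)^j) :=
          mul_le_mul h1 h2 (Zp_nonneg j) (by positivity)
        have key : (9/10:ℝ)^(k-j) * (1/2:ℝ)^j = (9/10:ℝ)^k * (5/9:ℝ)^j := by
          have e1 : (9/10:ℝ)^(k-j) * (9/10:ℝ)^j = (9/10:ℝ)^k :=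
            pow_sub_mul_pow _ hj.2
          have e2 : ((9/10:ℝ) * (5/9:ℝ))^j = (1/2:ℝ)^j := by norm_num
          calc (9/10:ℝ)^(k-j) * (1/2:ℝ)^j
              = (9/10:ℝ)^(k-j) * ((9/10:ℝ)^j * (5/9:ℝ)^j) := by
                rw [← mul_pow, e2]
            _ = ((9/10:ℝ)^(k-j) * (9/10:ℝ)^j) * (5/9:ℝ)^j := by ring
            _ = (9/10:ℝ)^k * (5/9:ℝ)^j := by rw [e1]
        calc c (k - j) * Zp j ≤ (2 * (9/10:ℝ)^(k-j)) * (4 * (1/2:ℝ)^j) := h3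
          _ = 8 * ((9/10:ℝ)^(k-j) * (1/2:ℝ)^j) := by ring
          _ = 8 * (9/10:ℝ)^k * (5/9:ℝ)^j := by rw [key]; ring
      have hsum : ∑ j ∈ Finset.Icc 2 k, c (k - j) * Zp j
          ≤ 8 * (9/10:ℝ)^k * (25/36) := by
        calc ∑ j ∈ Finset.Icc 2 k, c (k - j) * Zp j
            ≤ ∑ j ∈ Finset.Icc 2 k, 8 * (9/10:ℝ)^k * (5/9:ℝ)^j :=
              Finset.sum_le_sum hterm
          _ = 8 * (9/10:ℝ)^k * ∑ j ∈ Finset.Icc 2 k, (5/9:ℝ)^j := by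
              rw [Finset.mul_sum]
          _ ≤ 8 * (9/10:ℝ)^k * (25/36) := by
              have := sum_pow_five_ninth k
              have hp : (0:ℝ) ≤ 8 * (9/10:ℝ)^k := by positivity
              nlinarith
      have hsnn : (0:ℝ) ≤ ∑ j ∈ Finset.Icc 2 k, c (k - j) * Zp j := by
        refine Finset.sum_nonneg fun j hj => ?_
        rw [Finset.mem_Icc] at hj
        exact mul_nonneg (c_nonneg c hc0 hc _) (Zp_nonneg j)
      have hk3' : (3:ℝ) ≤ (k:ℝ) := by exact_mod_cast hk3
      have hinv : (1:ℝ)/(k:ℝ) ≤ 1/3 := by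
        apply div_le_div_of_nonneg_left (by norm_num) (by norm_num) hk3'
      calc (1/(k:ℝ)) * ∑ j ∈ Finset.Icc 2 k, c (k - j) * Zp j
          ≤ (1/3) * (8 * (9/10:ℝ)^k * (25/36)) := by
            apply mul_le_mul hinv hsum hsnn (by norm_num)
        _ ≤ 2 * (9/10:ℝ)^k := by
            have : (0:ℝ) ≤ (9/10:ℝ)^k := by positivity
            nlinarith

lemma c_rec : ∀ k : ℕ, (k:ℝ) * c k = ∑ j ∈ Finset.range (k+1), bb j * c (k - j) := by
  intro k
  rcases Nat.eq_zero_or_pos k with rfl | hk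
  · simp [bb_zero]
  · have hsub : Finset.Icc 2 k ⊆ Finset.range (k+1) := by
      intro j hj; rw [Finset.mem_Icc] at hj; rw [Finset.mem_range]; omega
    rw [← Finset.sum_subset hsub (fun j hj hj' => ?_)]
    · rw [hc k hk]
      have hk0 : (k:ℝ) ≠ 0 := by positivity
      rw [← mul_assoc, mul_one_div, div_self hk0, one_mul]
      refine Finset.sum_congr rfl fun j hj => ?_
      rw [Finset.mem_Icc] at hj
      rw [bb, if_pos hj.1, mul_comm]
    · rw [Finset.mem_range] at hj
      rw [Finset.mem_Icc] at hj'
      have : ¬ 2 ≤ j := by omega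
      rw [bb, if_neg this, zero_mul]

end cbounds

lemma pow_pred_le {x a : ℝ} (hx : |x| ≤ a) (ha : 1 ≤ a) (j : ℕ) : |x|^(j-1) ≤ a^j :=
  (pow_le_pow_left₀ (abs_nonneg x) hx _).trans (pow_le_pow_right₀ (by linarith) (by omega))

noncomputable def gg (x : ℝ) : ℝ := ∑' j, bb j * x^(j-1)
noncomputable def FF (x : ℝ) : ℝ := ∑' j : ℕ, bb j / j * x^j

lemma summable_2140 : Summable (fun j : ℕ => 4*(21/40:ℝ)^j) :=
  (summable_geometric_of_lt_one (by norm_num) (by norm_num)).mul_left 4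

lemma gg_term_bound {x : ℝ} (hx : |x| ≤ 21/20) (j : ℕ) :
    ‖bb j * x^(j-1)‖ ≤ 4*(21/40:ℝ)^j := by
  rw [norm_mul, Real.norm_eq_abs, Real.norm_eq_abs, abs_of_nonneg (bb_nonneg j), abs_pow]
  calc bb j * |x|^(j-1) ≤ (4*(1/2:ℝ)^j) * (21/20:ℝ)^j := by
        apply mul_le_mul (bb_le j) (pow_pred_le hx (by norm_num) j) (by positivity) (by positivity)
    _ = 4*(21/40:ℝ)^j := by
        rw [mul_assoc, ← mul_pow]; norm_num

lemma summable_gg_norm {x : ℝ} (hx : |x| ≤ 21/20) :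
    Summable (fun j : ℕ => ‖bb j * x^(j-1)‖) :=
  Summable.of_nonneg_of_le (fun j => norm_nonneg _) (gg_term_bound hx) summable_2140

lemma FF_term_hasDerivAt (j : ℕ) (y : ℝ) :
    HasDerivAt (fun z : ℝ => bb j / j * z^j) (bb j * y^(j-1)) y := by
  rcases j with _ | m
  · simpa [bb_zero] using hasDerivAt_const y (0:ℝ)
  · have h := (hasDerivAt_pow (m+1) y).const_mul (bb (m+1) / ((m+1):ℝ))
    rw [Nat.cast_add, Nat.cast_one]
    refine h.congr_deriv ?_
    rw [Nat.cast_add, Nat.cast_one]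
    have hne : ((m:ℝ) + 1) ≠ 0 := by positivity
    field_simp

lemma summable_FF_zero : Summable (fun j : ℕ => bb j / j * (0:ℝ)^j) := by
  apply summable_of_ne_finset_zero (s := {0})
  intro j hj
  simp only [Finset.mem_singleton] at hj
  rw [zero_pow hj, mul_zero]

lemma hasDerivAt_FF {x : ℝ} (hx : x ∈ Set.Ioo (-(21/20):ℝ) (21/20)) :
    HasDerivAt FF (gg x) x := by
  have := hasDerivAt_tsum_of_isPreconnected summable_2140 isOpen_Ioo
    (convex_Ioo _ _).isPreconnected
    (fun j y _ => FF_term_hasDerivAt j y)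
    (fun j y hy => gg_term_bound (le_of_lt (abs_lt.mpr ⟨hy.1, hy.2⟩)) j)
    (Set.mem_Ioo.mpr ⟨by norm_num, by norm_num⟩ : (0:ℝ) ∈ Set.Ioo _ _)
    summable_FF_zero hx
  exact this

section fpart
variable {c : ℕ → ℝ} (hnn : ∀ k, 0 ≤ c k) (hle : ∀ k, c k ≤ 2 * (9/10:ℝ)^k)

include hnn hle in
lemma c_norm_bound {x : ℝ} (hx : |x| ≤ 21/20) (k : ℕ) :
    ‖c k * x^k‖ ≤ 2*(189/200:ℝ)^k := by
  rw [norm_mul, Real.norm_eq_abs, Real.norm_eq_abs, abs_of_nonneg (hnn k), abs_pow]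
  calc c k * |x|^k ≤ (2*(9/10:ℝ)^k) * (21/20:ℝ)^k := by
        apply mul_le_mul (hle k) (pow_le_pow_left₀ (abs_nonneg x) hx k) (by positivity) (by positivity)
    _ = 2*(189/200:ℝ)^k := by rw [mul_assoc, ← mul_pow]; norm_num

include hnn hle in
lemma summable_c_norm {x : ℝ} (hx : |x| ≤ 21/20) :
    Summable (fun k : ℕ => ‖c k * x^k‖) :=
  Summable.of_nonneg_of_le (fun k => norm_nonneg _) (c_norm_bound hnn hle hx)
    ((summable_geometric_of_lt_one (by norm_num) (by norm_num)).mul_left 2)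

lemma summable_u : Summable (fun k : ℕ => 2*(k:ℝ)*(189/200:ℝ)^k) := by
  have h := (summable_pow_mul_geometric_of_norm_lt_one (R := ℝ) 1
    (r := (189/200:ℝ)) (by rw [Real.norm_eq_abs, abs_of_nonneg] <;> norm_num)).mul_left 2
  refine h.congr fun k => ?_
  rw [pow_one]; ring

include hnn hle in
lemma c_deriv_bound {x : ℝ} (hx : |x| ≤ 21/20) (k : ℕ) :
    ‖c k * ((k:ℝ) * x^(k-1))‖ ≤ 2*(k:ℝ)*(189/200:ℝ)^k := by
  rw [norm_mul, norm_mul, Real.norm_eq_abs, Real.norm_eq_abs, Real.norm_eq_abs,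
    abs_of_nonneg (hnn k), abs_of_nonneg (by positivity : (0:ℝ) ≤ (k:ℝ)), abs_pow]
  calc c k * ((k:ℝ) * |x|^(k-1))
      ≤ (2*(9/10:ℝ)^k) * ((k:ℝ) * (21/20:ℝ)^k) := by
        apply mul_le_mul (hle k) ?_ (by positivity) (by positivity)
        exact mul_le_mul_of_nonneg_left (pow_pred_le hx (by norm_num) k) (by positivity)
    _ = 2*(k:ℝ)*((9/10:ℝ)^k * (21/20:ℝ)^k) := by ring
    _ = 2*(k:ℝ)*(189/200:ℝ)^k := by rw [← mul_pow]; norm_num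

lemma summable_c_zero_pt : Summable (fun k : ℕ => c k * (0:ℝ)^k) := by
  apply summable_of_ne_finset_zero (s := {0})
  intro k hk
  simp only [Finset.mem_singleton] at hk
  rw [zero_pow hk, mul_zero]

include hnn hle in
lemma hasDerivAt_fc {x : ℝ} (hx : x ∈ Set.Ioo (-(21/20):ℝ) (21/20)) :
    HasDerivAt (fun z : ℝ => ∑' k : ℕ, c k * z^k) (∑' k : ℕ, c k * ((k:ℝ) * x^(k-1))) x := by
  exact hasDerivAt_tsum_of_isPreconnected summable_u isOpen_Ioo
    (convex_Ioo _ _).isPreconnected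
    (fun k y _ => (hasDerivAt_pow k y).const_mul (c k))
    (fun k y hy => c_deriv_bound hnn hle (le_of_lt (abs_lt.mpr ⟨hy.1, hy.2⟩)) k)
    (Set.mem_Ioo.mpr ⟨by norm_num, by norm_num⟩ : (0:ℝ) ∈ Set.Ioo _ _)
    summable_c_zero_pt hx

include hnn hle in
lemma cauchy_eq (hrec : ∀ k : ℕ, (k:ℝ) * c k = ∑ j ∈ Finset.range (k+1), bb j * c (k - j))
    {x : ℝ} (hx : |x| ≤ 21/20) :
    ∑' k : ℕ, c k * ((k:ℝ) * x^(k-1)) = gg x * ∑' k : ℕ, c k * x^k := by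
  rw [gg, tsum_mul_tsum_eq_tsum_sum_range_of_summable_norm (summable_gg_norm hx)
    (summable_c_norm hnn hle hx)]
  refine tsum_congr fun n => ?_
  have hinner : ∀ k ∈ Finset.range (n+1),
      (bb k * x^(k-1)) * (c (n-k) * x^(n-k)) = (bb k * c (n-k)) * x^(n-1) := by
    intro k hk
    rw [Finset.mem_range] at hk
    rcases k with _ | m
    · rw [bb_zero]; ring
    · have he : (m + (n - (m+1))) = n - 1 := by omega
      calc (bb (m+1) * x^(m+1-1)) * (c (n-(m+1)) * x^(n-(m+1)))
          = (bb (m+1) * c (n-(m+1))) * (x^m * x^(n-(m+1))) := by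
            rw [Nat.add_sub_cancel]; ring
        _ = (bb (m+1) * c (n-(m+1))) * x^(n-1) := by rw [← pow_add, he]
  rw [Finset.sum_congr rfl hinner, ← Finset.sum_mul, ← hrec n]
  ring

end fpart


lemma summable_bb_div : Summable (fun j : ℕ => bb j / (j:ℝ)) := by
  refine Summable.of_nonneg_of_le (fun j => div_nonneg (bb_nonneg j) (Nat.cast_nonneg j))
    (fun j => ?_) summable_2140
  have hbj : bb j / (j:ℝ) ≤ bb j := by
    rcases j with _ | m
    · simp [bb_zero]
    · apply div_le_self (bb_nonneg _)
      exact_mod_cast Nat.succ_le_succ (Nat.zero_le m)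
  refine hbj.trans ((bb_le j).trans ?_)
  exact mul_le_mul_of_nonneg_left
    (pow_le_pow_left₀ (by norm_num) (by norm_num) j) (by norm_num)

lemma FF_one : FF 1 = ∑' j : ℕ, Zp (j+2) / ((j:ℝ)+2) := by
  have h1 : FF 1 = ∑' j : ℕ, bb j / (j:ℝ) := by
    rw [FF]; exact tsum_congr fun j => by rw [one_pow, mul_one]
  rw [h1, Summable.tsum_eq_zero_add summable_bb_div,
    Summable.tsum_eq_zero_add ((summable_nat_add_iff 1).mpr summable_bb_div)]
  rw [bb_zero, bb_one]
  norm_num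
  refine tsum_congr fun j => ?_
  have h2 : bb (j+1+1) = Zp (j+2) := by rw [bb, if_pos (by omega)]
  rw [h2]
  ring_nf

lemma FF_zero : FF 0 = 0 := by
  rw [FF, tsum_eq_single 0 (fun j hj => by rw [zero_pow hj, mul_zero])]
  simp [bb_zero]

lemma hasSum_prime_log (p : Nat.Primes) :
    HasSum (fun n : ℕ => (1/((p:ℕ):ℝ))^(n+2)/((n:ℝ)+2))
      (-(Real.log (1 - 1/((p:ℕ):ℝ)) + 1/((p:ℕ):ℝ))) := by
  set q : ℝ := ((p:ℕ):ℝ) with hq'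
  have hq : (2:ℝ) ≤ q := prime_two_le p
  have habs : |1/q| < 1 := by
    rw [abs_of_nonneg (by positivity), div_lt_one (by linarith)]; linarith
  have S := Real.hasSum_pow_div_log_of_abs_lt_one habs
  have S2 := (hasSum_nat_add_iff'
    (f := fun n : ℕ => (1/q)^(n+1)/((n:ℝ)+1)) 1).mpr S
  simp only [Finset.range_one, Finset.sum_singleton, Nat.cast_zero, zero_add, pow_one,
    div_one] at S2
  have hfe : (fun n : ℕ => (1/q)^(n+2)/((n:ℝ)+2))
      = fun n : ℕ => (1/q)^(n+1+1)/((((n+1):ℕ):ℝ)+1) := by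
    funext n; push_cast; ring_nf
  have hv : -(Real.log (1 - 1/q) + 1/q) = -Real.log (1 - 1/q) - 1/q := by ring
  rw [hv, hfe]
  exact S2

lemma summable_uncurry_prime :
    Summable (Function.uncurry (fun (p : Nat.Primes) (n : ℕ) =>
      (1/((p:ℕ):ℝ))^(n+2)/((n:ℝ)+2))) := by
  have h1 : Summable (fun p : Nat.Primes => (1/((p:ℕ):ℝ))^2) := by
    refine (summable_primes_pow le_rfl).congr fun p => ?_
    rw [one_div_pow]
  have h2 : Summable (fun n : ℕ => (1/2:ℝ)^n) :=
    summable_geometric_of_lt_one (by norm_num) (by norm_num)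
  have hdom := Summable.mul_of_nonneg h1 h2
    (fun p => by positivity) (fun n => by positivity)
  refine Summable.of_nonneg_of_le (fun x => ?_) (fun x => ?_) hdom
  · obtain ⟨p, n⟩ := x
    simp only [Function.uncurry]
    positivity
  obtain ⟨p, n⟩ := x
  have hq : (2:ℝ) ≤ ((p:ℕ):ℝ) := prime_two_le p
  simp only [Function.uncurry]
  have hq0 : (0:ℝ) < ((p:ℕ):ℝ) := by linarith
  have hnn : (0:ℝ) ≤ 1/((p:ℕ):ℝ) := by positivity
  calc (1/((p:ℕ):ℝ))^(n+2)/((n:ℝ)+2) ≤ (1/((p:ℕ):ℝ))^(n+2) := by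
        apply div_le_self (pow_nonneg hnn _) (by linarith [Nat.cast_nonneg (α := ℝ) n])
    _ = (1/((p:ℕ):ℝ))^2 * (1/((p:ℕ):ℝ))^n := by rw [← pow_add]; ring_nf
    _ ≤ (1/((p:ℕ):ℝ))^2 * (1/2:ℝ)^n := by
        apply mul_le_mul_of_nonneg_left _ (pow_nonneg hnn 2)
        apply pow_le_pow_left₀ hnn
        rw [div_le_div_iff₀ hq0 (by norm_num)]
        linarith

lemma tsum_primes_eq (n : ℕ) :
    ∑' p : Nat.Primes, (1/((p:ℕ):ℝ))^(n+2)/((n:ℝ)+2) = Zp (n+2) / ((n:ℝ)+2) := by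
  rw [Zp, ← tsum_div_const]
  refine tsum_congr fun p => ?_
  rw [one_div_pow]

lemma gamma_beta (β : ℝ)
    (hβ : β = Real.eulerMascheroniConstant
        + ∑' p : Nat.Primes, (Real.log (1 - 1 / ((p : ℕ) : ℝ)) + 1 / ((p : ℕ) : ℝ))) :
    Real.eulerMascheroniConstant - β = ∑' j : ℕ, Zp (j+2) / ((j:ℝ)+2) := by
  rw [hβ]
  have e1 : Real.eulerMascheroniConstant
      - (Real.eulerMascheroniConstant
        + ∑' p : Nat.Primes, (Real.log (1 - 1 / ((p : ℕ) : ℝ)) + 1 / ((p : ℕ) : ℝ)))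
      = ∑' p : Nat.Primes, -(Real.log (1 - 1 / ((p : ℕ) : ℝ)) + 1 / ((p : ℕ) : ℝ)) := by
    rw [tsum_neg]; ring
  rw [e1]
  have e2 : ∑' p : Nat.Primes, -(Real.log (1 - 1 / ((p : ℕ) : ℝ)) + 1 / ((p : ℕ) : ℝ))
      = ∑' (p : Nat.Primes) (n : ℕ), (1/((p:ℕ):ℝ))^(n+2)/((n:ℝ)+2) :=
    tsum_congr fun p => ((hasSum_prime_log p).tsum_eq).symm
  rw [e2, ← Summable.tsum_comm summable_uncurry_prime]
  exact tsum_congr fun n => tsum_primes_eq n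

theorem sum_ck_eq (c : ℕ → ℝ) (hc0 : c 0 = 1)
    (hc : ∀ k, 1 ≤ k → c k = (1 / (k : ℝ)) * ∑ j ∈ Finset.Icc 2 k, c (k - j) * Zp j)
    (β : ℝ)
    (hβ : β = Real.eulerMascheroniConstant
        + ∑' p : Nat.Primes, (Real.log (1 - 1 / ((p : ℕ) : ℝ)) + 1 / ((p : ℕ) : ℝ))) :
    Summable c
    ∧ ∑' k : ℕ, c k = Real.exp (∑' j : ℕ, Zp (j + 2) / ((j : ℝ) + 2))
    ∧ ∑' k : ℕ, c k = Real.exp (Real.eulerMascheroniConstant - β) := by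
  have hnn := c_nonneg c hc0 hc
  have hle := c_le c hc0 hc
  have hrec := c_rec c hc0 hc
  have hsummc : Summable c :=
    Summable.of_nonneg_of_le hnn hle
      ((summable_geometric_of_lt_one (by norm_num) (by norm_num)).mul_left 2)
  have ht : ∀ x : ℝ, x ∈ Set.Ioo (-(21/20):ℝ) (21/20) → |x| ≤ 21/20 := fun x hx =>
    le_of_lt (abs_lt.mpr ⟨hx.1, hx.2⟩)
  have hd : ∀ x ∈ Set.Ioo (-(21/20):ℝ) (21/20),
      HasDerivAt (fun z : ℝ => ∑' k : ℕ, c k * z^k)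
        (gg x * ∑' k : ℕ, c k * x^k) x := by
    intro x hx
    have h1 := hasDerivAt_fc hnn hle hx
    rwa [cauchy_eq hnn hle hrec (ht x hx)] at h1
  have hd0 : ∀ x ∈ Set.Ioo (-(21/20):ℝ) (21/20),
      HasDerivAt (fun y : ℝ => (∑' k : ℕ, c k * y^k) * Real.exp (-(FF y))) 0 x := by
    intro x hx
    have h2 := ((hasDerivAt_FF hx).neg).exp
    have h3 := (hd x hx).mul h2
    refine h3.congr_deriv ?_
    ring
  have hsub : Set.Icc (0:ℝ) 1 ⊆ Set.Ioo (-(21/20):ℝ) (21/20) := by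
    intro x hx
    exact ⟨by linarith [hx.1], by linarith [hx.2]⟩
  have hconst := constant_of_has_deriv_right_zero
    (f := fun y : ℝ => (∑' k : ℕ, c k * y^k) * Real.exp (-(FF y))) (a := 0) (b := 1)
    (fun x hx => ((hd0 x (hsub hx)).continuousAt).continuousWithinAt)
    (fun x hx => ((hd0 x (hsub ⟨hx.1, le_of_lt hx.2⟩)).hasDerivWithinAt))
    1 (Set.right_mem_Icc.mpr zero_le_one)
  have hf0 : (∑' k : ℕ, c k * (0:ℝ)^k) = 1 := by
    rw [tsum_eq_single 0 (fun k hk => by rw [zero_pow hk, mul_zero])]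
    simp [hc0]
  have hf1 : (∑' k : ℕ, c k * (1:ℝ)^k) = ∑' k : ℕ, c k :=
    tsum_congr fun k => by rw [one_pow, mul_one]
  rw [hf0, FF_zero, neg_zero, Real.exp_zero, mul_one] at hconst
  have hkey : ∑' k : ℕ, c k = Real.exp (FF 1) := by
    rw [← hf1]
    have h4 := congrArg (· * Real.exp (FF 1)) hconst
    simp only [one_mul] at h4
    rwa [mul_assoc, ← Real.exp_add, neg_add_cancel, Real.exp_zero, mul_one] at h4
  refine ⟨hsummc, ?_, ?_⟩
  · rw [hkey, FF_one]
  · rw [hkey, FF_one, gamma_beta β hβ]
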